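/- Let Q be a connected loop-less quiver with m vertices and n arrows, and suppose Λ_Q := Id_m - I(Q)·Ǧ_Q^{-1}·I(Q)^T is the permutation matrix of a permutation ξ of the vertex set, whose cycle type is the partition π = (π_1,...,π_ℓ) of m. Then the characteristic polynomial of the Coxeter matrix Cox_Q = -Ǧ_Q^T Ǧ_Q^{-1} equals (x-1)^{n-m} · ∏_{a=1}^{ℓ}(x^{π_a} - 1). -/

import Mathlib

open Matrix Polynomial

/-- Incidence matrix of a quiver with vertex set `Fin m`, arrow set `Fin n`,
source map `s` and target map `t`: the column of arrow `i` is `e_{s i} - e_{t i}`. -/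
def incMatrix {m n : ℕ} (s t : Fin n → Fin m) : Matrix (Fin m) (Fin n) ℤ :=
  Matrix.of fun v i => (if v = s i then (1 : ℤ) else 0) - (if v = t i then (1 : ℤ) else 0)

/-- Connectedness of the underlying multigraph of the quiver `(s, t)`. -/
def QuiverConnected {m n : ℕ} (s t : Fin n → Fin m) : Prop :=
  ∀ v w : Fin m,
    Relation.ReflTransGen (fun a b => ∃ i : Fin n, (s i = a ∧ t i = b) ∨ (s i = b ∧ t i = a)) v w

/-- The endpoint of arrow `i` other than `v` (for a loop-less quiver). -/
def otherEnd {m n : ℕ} (s t : Fin n → Fin m) (i : Fin n) (v : Fin m) : Fin m :=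
  if s i = v then t i else s i

/-- Iterate the minimally decreasing walk starting at `v`, using only arrows with
index `< b`, always crossing the maximal available arrow. Returns the final vertex. -/
def xiAux {m n : ℕ} (s t : Fin n → Fin m) (b : ℕ) (v : Fin m) : Fin m :=
  if h : (Finset.univ.filter (fun i : Fin n => (s i = v ∨ t i = v) ∧ i.val < b)).Nonempty then
    xiAux s t
      ((Finset.univ.filter (fun i : Fin n => (s i = v ∨ t i = v) ∧ i.val < b)).max' h).val
      (otherEnd s t
        ((Finset.univ.filter (fun i : Fin n => (s i = v ∨ t i = v) ∧ i.val < b)).max' h) v)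
  else v
termination_by b
decreasing_by
  exact (Finset.mem_filter.mp (Finset.max'_mem _ h)).2.2

/-- The permutation of vertices `ξ⁻` determined by structural minimally decreasing walks:
`xiDown s t v` is the end vertex of the structural decreasing walk starting at `v`. -/
def xiDown {m n : ℕ} (s t : Fin n → Fin m) (v : Fin m) : Fin m :=
  xiAux s t n v

/-- Iterate the minimally increasing walk starting at `v`, using only arrows with
index `≥ b`, always crossing the minimal available arrow. Returns the final vertex. -/
def xiAuxUp {m n : ℕ} (s t : Fin n → Fin m) (b : ℕ) (v : Fin m) : Fin m :=
  if h : (Finset.univ.filter (fun i : Fin n => (s i = v ∨ t i = v) ∧ b ≤ i.val)).Nonempty then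
    xiAuxUp s t
      (((Finset.univ.filter (fun i : Fin n => (s i = v ∨ t i = v) ∧ b ≤ i.val)).min' h).val + 1)
      (otherEnd s t
        ((Finset.univ.filter (fun i : Fin n => (s i = v ∨ t i = v) ∧ b ≤ i.val)).min' h) v)
  else v
termination_by n - b
decreasing_by
  have h1 := (Finset.mem_filter.mp (Finset.min'_mem _ h)).2.2
  have h2 := ((Finset.univ.filter (fun i : Fin n => (s i = v ∨ t i = v) ∧ b ≤ i.val)).min' h).isLt
  omega

/-- The map `ξ⁺`: end vertex of the structural minimally increasing walk starting at `v`. -/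
def xiUp {m n : ℕ} (s t : Fin n → Fin m) (v : Fin m) : Fin m :=
  xiAuxUp s t 0 v


/-- Source vertex of a walk-step `(i, ε)`: `s i` if traversed positively, else `t i`. -/
def stepSrc {m n : ℕ} (s t : Fin n → Fin m) (p : Fin n × Bool) : Fin m :=
  if p.2 then s p.1 else t p.1

/-- Target vertex of a walk-step `(i, ε)`. -/
def stepTgt {m n : ℕ} (s t : Fin n → Fin m) (p : Fin n × Bool) : Fin m :=
  if p.2 then t p.1 else s p.1


section Aux
open Equiv Equiv.Perm

lemma permMatrix_apply {α : Type*} [DecidableEq α] (σ : Equiv.Perm α) (i j : α) :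
    σ.permMatrix ℤ i j = if σ i = j then 1 else 0 := by
  simp [Equiv.Perm.permMatrix, PEquiv.toMatrix_apply, Equiv.toPEquiv_apply]

lemma charpoly_permMatrix_finRotate (k : ℕ) (hk : 0 < k) :
    ((finRotate k).permMatrix ℤ).charpoly = X ^ k - 1 := by
  obtain ⟨k', rfl⟩ : ∃ k', k = k' + 1 := ⟨k - 1, by omega⟩
  rcases Nat.eq_zero_or_pos k' with rfl | hk'
  · rw [Matrix.charpoly, Matrix.det_fin_one, charmatrix_apply_eq, permMatrix_apply]
    norm_num
  obtain ⟨a, rfl⟩ : ∃ a, k' = a + 1 := ⟨k' - 1, by omega⟩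
  set K := a + 2 with hK
  set P := (finRotate K).permMatrix ℤ with hP
  set A := charmatrix P with hA
  have hPapp : ∀ i j : Fin K, P i j = if i + 1 = j then (1:ℤ) else 0 := by
    intro i j; rw [hP, permMatrix_apply, finRotate_succ_apply]
  have hrot : ∀ i j : Fin K, (i + 1 = j) ↔ ((i = Fin.last (a+1) ∧ j.val = 0) ∨ (i ≠ Fin.last (a+1) ∧ j.val = i.val + 1)) := by
    intro i j
    rw [Fin.ext_iff, Fin.val_add_one]
    by_cases h : i = Fin.last (a+1) <;> simp only [h, eq_self_iff_true, if_true, if_false, true_and, false_and,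
      or_false, false_or, ne_eq, not_true_eq_false, not_false_eq_true] <;> omega
  have hdet := Matrix.det_succ_column_zero A
  rw [Matrix.charpoly]
  rw [hdet]
  have hzero : ∀ i ∈ (Finset.univ : Finset (Fin K)), i ∉ ({0, Fin.last (a+1)} : Finset (Fin K)) →
      ((-1:ℤ[X]) ^ (i:ℕ) * A i 0 * (A.submatrix i.succAbove Fin.succ).det) = 0 := by
    intro i _ hi
    simp only [Finset.mem_insert, Finset.mem_singleton] at hi
    push_neg at hi
    have : A i 0 = 0 := by
      rw [hA, charmatrix_apply_ne _ _ _ hi.1, hPapp]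
      rw [if_neg]
      · simp
      · rw [hrot]; push_neg
        constructor
        · intro h; exact absurd h hi.2
        · intro h; simp
    rw [this]; ring
  rw [← Finset.sum_subset (Finset.subset_univ ({0, Fin.last (a+1)} : Finset (Fin K))) hzero]
  have h0last : (0 : Fin K) ≠ Fin.last (a+1) := by
    intro h; exact absurd (congrArg Fin.val h) (by simp)
  rw [Finset.sum_pair h0last]
  -- term at 0
  have hA00 : A 0 0 = X := by
    rw [hA, charmatrix_apply_eq, hPapp, if_neg]
    · simp
    · rw [hrot]; push_neg
      constructor
      · intro h; exact absurd (congrArg Fin.val h) (by simp)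
      · intro h; simp
  have hAlast0 : A (Fin.last (a+1)) 0 = -1 := by
    rw [hA, charmatrix_apply_ne _ _ _ (Ne.symm h0last), hPapp, if_pos]
    · simp
    · rw [hrot]; left; exact ⟨rfl, rfl⟩
  -- minor at 0 : upper triangular, diag X
  have hminor0 : (A.submatrix (Fin.succAbove 0) Fin.succ).det = X ^ (a+1) := by
    rw [Fin.succAbove_zero]
    have htri : (A.submatrix Fin.succ Fin.succ).BlockTriangular id := by
      intro i j hij
      have hij' : (j:ℕ) < (i:ℕ) := hij
      have hne : (Fin.succ i : Fin K) ≠ Fin.succ j := by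
        simp [Fin.ext_iff]; omega
      rw [Matrix.submatrix_apply, hA, charmatrix_apply_ne _ _ _ hne, hPapp, if_neg]
      · simp
      · rw [hrot]; push_neg
        constructor
        · intro h; simp only [Fin.ext_iff, Fin.val_succ, Fin.val_last, Fin.val_castSucc] at h ⊢
          all_goals omega
        · intro h; simp only [Fin.ext_iff, Fin.val_succ, Fin.val_last, Fin.val_castSucc] at h ⊢
          all_goals omega
    rw [Matrix.det_of_upperTriangular htri]
    have : ∀ i : Fin (a+1), (A.submatrix Fin.succ Fin.succ) i i = X := by
      intro i
      rw [Matrix.submatrix_apply, hA, charmatrix_apply_eq, hPapp, if_neg]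
      · simp
      · rw [hrot]; push_neg
        constructor
        · intro h; simp only [Fin.ext_iff, Fin.val_succ, Fin.val_last, Fin.val_castSucc] at h ⊢
          all_goals omega
        · intro h; simp only [Fin.ext_iff, Fin.val_succ, Fin.val_last, Fin.val_castSucc] at h ⊢
          all_goals omega
    calc ∏ x : Fin (a+1), (A.submatrix Fin.succ Fin.succ) x x
        = ∏ _x : Fin (a+1), (X:ℤ[X]) := Finset.prod_congr rfl fun i _ => this i
      _ = X ^ (a+1) := by simp
  -- minor at last : lower triangular, diag -1
  have hminorlast : (A.submatrix (Fin.succAbove (Fin.last (a+1))) Fin.succ).det = (-1:ℤ[X]) ^ (a+1) := by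
    rw [Fin.succAbove_last]
    have htri : (A.submatrix Fin.castSucc Fin.succ).BlockTriangular OrderDual.toDual := by
      intro i j hij
      have hij' : (i:ℕ) < (j:ℕ) := hij
      have hne : (Fin.castSucc i : Fin K) ≠ Fin.succ j := by
        simp [Fin.ext_iff]; omega
      rw [Matrix.submatrix_apply, hA, charmatrix_apply_ne _ _ _ hne, hPapp, if_neg]
      · simp
      · rw [hrot]; push_neg
        constructor
        · intro h; simp only [Fin.ext_iff, Fin.val_succ, Fin.val_last, Fin.val_castSucc] at h ⊢
          all_goals omega
        · intro h; simp only [Fin.ext_iff, Fin.val_succ, Fin.val_last, Fin.val_castSucc] at h ⊢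
          all_goals omega
    rw [Matrix.det_of_lowerTriangular _ htri]
    have : ∀ i : Fin (a+1), (A.submatrix Fin.castSucc Fin.succ) i i = -1 := by
      intro i
      have hne : (Fin.castSucc i : Fin K) ≠ Fin.succ i := by
        simp [Fin.ext_iff]
      rw [Matrix.submatrix_apply, hA, charmatrix_apply_ne _ _ _ hne, hPapp, if_pos]
      · simp
      · rw [hrot]
        by_cases h : Fin.castSucc i = Fin.last (a+1)
        · exfalso
          have := congrArg Fin.val h
          simp [Fin.ext_iff] at h
          omega
        · right; exact ⟨h, by simp⟩
    calc ∏ x : Fin (a+1), (A.submatrix Fin.castSucc Fin.succ) x x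
        = ∏ _x : Fin (a+1), (-1:ℤ[X]) := Finset.prod_congr rfl fun i _ => this i
      _ = (-1) ^ (a+1) := by simp
  rw [hA00, hAlast0, hminor0, hminorlast]
  have hlv : ((Fin.last (a+1) : Fin K) : ℕ) = a + 1 := rfl
  rw [hlv]
  have he : ((-1:ℤ[X]) ^ (a+1)) * ((-1:ℤ[X]) ^ (a+1)) = 1 := by
    rw [← pow_add]; exact Even.neg_one_pow ⟨a+1, by ring⟩
  have : ((0:Fin K):ℕ) = 0 := rfl
  rw [this]
  ring_nf
  ring_nf at he
  rw [he]  -- may not match; adjust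
  ring

lemma permMatrix_one {β : Type*} [Fintype β] [DecidableEq β] :
    ((1 : Equiv.Perm β).permMatrix ℤ) = 1 := by
  ext i j
  simp [permMatrix_apply, Matrix.one_apply, Equiv.toPEquiv_apply]

lemma charpoly_one' (β : Type*) [Fintype β] [DecidableEq β] :
    (1 : Matrix β β ℤ).charpoly = (X - 1) ^ Fintype.card β := by
  have h : charmatrix (1 : Matrix β β ℤ) = Matrix.diagonal fun _ => X - 1 := by
    ext i j
    by_cases h : i = j
    · subst h; simp
    · simp [charmatrix_apply_ne _ _ _ h, Matrix.one_apply_ne h, Matrix.diagonal_apply_ne _ h]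
  rw [Matrix.charpoly, h, Matrix.det_diagonal]
  simp

lemma permMatrix_permCongr {α β : Type*} [Fintype α] [Fintype β] [DecidableEq α] [DecidableEq β]
    (e : α ≃ β) (σ : Equiv.Perm α) :
    ((e.permCongr σ).permMatrix ℤ) = Matrix.reindex e e (σ.permMatrix ℤ) := by
  ext i j
  simp only [permMatrix_apply, Matrix.reindex_apply, Matrix.submatrix_apply,
    Equiv.permCongr_apply]
  refine if_congr ?_ rfl rfl
  rw [Equiv.apply_eq_iff_eq_symm_apply]

lemma charpoly_permMatrix_permCongr {α β : Type*} [Fintype α] [Fintype β] [DecidableEq α]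
    [DecidableEq β] (e : α ≃ β) (σ : Equiv.Perm α) :
    ((e.permCongr σ).permMatrix ℤ).charpoly = (σ.permMatrix ℤ).charpoly := by
  rw [permMatrix_permCongr, Matrix.charpoly_reindex]

lemma charpoly_permMatrix_conj {α : Type*} [Fintype α] [DecidableEq α] (π σ : Equiv.Perm α) :
    ((π * σ * π⁻¹ : Equiv.Perm α).permMatrix ℤ).charpoly = (σ.permMatrix ℤ).charpoly := by
  have h : (π * σ * π⁻¹ : Equiv.Perm α) = (π : α ≃ α).permCongr σ := by
    ext x
    simp [Equiv.permCongr_apply, Equiv.Perm.mul_apply]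
  rw [h, charpoly_permMatrix_permCongr]

lemma charpoly_permMatrix_split {α : Type*} [Fintype α] [DecidableEq α] (σ : Equiv.Perm α)
    (p : α → Prop) [DecidablePred p] (hp : ∀ x, p (σ x) ↔ p x) :
    (σ.permMatrix ℤ).charpoly =
      ((σ.subtypePerm hp).permMatrix ℤ).charpoly *
      ((σ.subtypePerm (fun x => not_congr (hp x)) : Equiv.Perm {x // ¬ p x}).permMatrix ℤ).charpoly := by
  classical
  set e : {x // p x} ⊕ {x // ¬ p x} ≃ α := Equiv.sumCompl p with he
  have hblock : Matrix.reindex e.symm e.symm (σ.permMatrix ℤ)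
      = Matrix.fromBlocks ((σ.subtypePerm hp).permMatrix ℤ) 0 0
          ((σ.subtypePerm (fun x => not_congr (hp x))).permMatrix ℤ) := by
    ext i j
    rcases i with a | a <;> rcases j with b | b <;>
      simp only [Matrix.reindex_apply, Matrix.submatrix_apply, Equiv.symm_symm, he,
        Equiv.sumCompl_apply_inl, Equiv.sumCompl_apply_inr, Matrix.fromBlocks_apply₁₁,
        Matrix.fromBlocks_apply₁₂, Matrix.fromBlocks_apply₂₁, Matrix.fromBlocks_apply₂₂,
        permMatrix_apply, Matrix.zero_apply]
    · refine if_congr ?_ rfl rfl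
      rw [Equiv.Perm.subtypePerm_apply, Subtype.ext_iff]
    · rw [if_neg]
      intro h
      exact b.2 (h ▸ (hp a).mpr a.2)
    · rw [if_neg]
      intro h
      exact a.2 ((hp a).mp (h ▸ b.2))
    · refine if_congr ?_ rfl rfl
      rw [Equiv.Perm.subtypePerm_apply, Subtype.ext_iff]
  have := Matrix.charpoly_reindex e.symm (σ.permMatrix ℤ)
  rw [← this, hblock, Matrix.charpoly_fromBlocks_zero₁₂]

lemma permCongr_mul' {α β : Type*} (e : α ≃ β) (σ τ : Equiv.Perm α) :
    e.permCongr (σ * τ) = e.permCongr σ * e.permCongr τ := by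
  ext x
  simp [Equiv.permCongr_apply, Equiv.Perm.mul_apply]

lemma isCycle_permCongr {α β : Type*} (e : α ≃ β) {σ : Equiv.Perm α} (hσ : σ.IsCycle) :
    (e.permCongr σ).IsCycle := by
  classical
  let M : Equiv.Perm α →* Equiv.Perm β := MonoidHom.mk' (fun σ => e.permCongr σ)
    (permCongr_mul' e)
  obtain ⟨x, hx, h⟩ := hσ
  refine ⟨e x, ?_, ?_⟩
  · simp only [Equiv.permCongr_apply, Equiv.symm_apply_apply]
    exact fun hh => hx (e.injective hh)
  · intro y hy
    have hy' : σ (e.symm y) ≠ e.symm y := by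
      intro hh
      apply hy
      simp [Equiv.permCongr_apply, hh]
    obtain ⟨i, hi⟩ := h hy'
    refine ⟨i, ?_⟩
    have : (e.permCongr σ) ^ i = e.permCongr (σ ^ i) := (map_zpow M σ i).symm
    rw [this]
    simp only [Equiv.permCongr_apply, Equiv.symm_apply_apply, hi, Equiv.apply_symm_apply]

lemma charpoly_isCycle_full {β : Type*} [Fintype β] [DecidableEq β] (σ : Equiv.Perm β)
    (hσ : σ.IsCycle) (hfull : ∀ x, σ x ≠ x) :
    (σ.permMatrix ℤ).charpoly = X ^ (Fintype.card β) - 1 := by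
  classical
  have hpos : 0 < Fintype.card β := by
    obtain ⟨x, -, -⟩ := hσ
    exact Fintype.card_pos_iff.mpr ⟨x⟩
  set k := Fintype.card β with hk
  let e : β ≃ Fin k := Fintype.equivFin β
  set τ := e.permCongr σ with hτ
  have hτc : τ.IsCycle := isCycle_permCongr e hσ
  have hτfull : ∀ y, τ y ≠ y := by
    intro y hy
    apply hfull (e.symm y)
    have := congrArg e.symm hy
    rw [hτ] at this
    simpa using this
  have hsupτ : τ.support = Finset.univ := by
    ext y; simp [Equiv.Perm.mem_support, hτfull y]
  have hk2 : 2 ≤ k := by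
    have := hτc.two_le_card_support
    rwa [hsupτ, Finset.card_univ, Fintype.card_fin] at this
  have hrotc : (finRotate k).IsCycle := isCycle_finRotate_of_le hk2
  have hconj : IsConj τ (finRotate k) := by
    refine hτc.isConj hrotc ?_
    rw [hsupτ, support_finRotate_of_le hk2]
  obtain ⟨c, hc⟩ := isConj_iff.mp hconj
  calc (σ.permMatrix ℤ).charpoly = (τ.permMatrix ℤ).charpoly :=
        (charpoly_permMatrix_permCongr e σ).symm
    _ = ((c * τ * c⁻¹ : Equiv.Perm (Fin k)).permMatrix ℤ).charpoly :=
        (charpoly_permMatrix_conj c τ).symm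
    _ = ((finRotate k).permMatrix ℤ).charpoly := by rw [hc]
    _ = X ^ k - 1 := charpoly_permMatrix_finRotate k (by omega)

lemma card_subtype_ne (α : Type*) [Fintype α] [DecidableEq α] (σ : Equiv.Perm α) :
    Fintype.card {x // σ x ≠ x} = σ.support.card := by
  rw [Fintype.card_subtype]
  rfl

lemma X_sub_one_ne_zero : (X - 1 : ℤ[X]) ≠ 0 := by
  have h := Polynomial.X_sub_C_ne_zero (1 : ℤ)
  simpa using h

lemma charpoly_permMatrix {α : Type*} [Fintype α] [DecidableEq α] (σ : Equiv.Perm α) :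
    (σ.permMatrix ℤ).charpoly
      = (X - 1) ^ (Fintype.card α - σ.support.card) *
        (σ.cycleType.map fun a => (X : ℤ[X]) ^ a - 1).prod := by
  classical
  induction σ using Equiv.Perm.cycle_induction_on with
  | base_one => simp [_root_.permMatrix_one, charpoly_one']
  | base_cycles σ hσ =>
    have hp : ∀ x, (σ (σ x) ≠ σ x) ↔ (σ x ≠ x) := by
      intro x; simp
    rw [charpoly_permMatrix_split σ (fun x => σ x ≠ x) hp]
    have hnt : Set.Nontrivial {x | σ x ≠ x} := by
      obtain ⟨x, hx, -⟩ := hσ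
      exact ⟨x, hx, σ x, fun h => hx (σ.injective h), Ne.symm hx⟩
    have hcyc : (σ.subtypePerm hp).IsCycle := hσ.isCycleOn.isCycle_subtypePerm hnt
    have hfull : ∀ y : {x // σ x ≠ x}, (σ.subtypePerm hp) y ≠ y := by
      intro y h
      exact y.2 (congrArg Subtype.val h)
    have h1 : ((σ.subtypePerm (p := fun x => σ x ≠ x) hp).permMatrix ℤ).charpoly = X ^ σ.support.card - 1 := by
      rw [charpoly_isCycle_full _ hcyc hfull]
      congr 2
      exact (Fintype.card_congr (Equiv.refl _)).trans (card_subtype_ne α σ)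
    have h2 : (σ.subtypePerm (fun x => not_congr (hp x)) : Equiv.Perm {x // ¬ σ x ≠ x}) = 1 := by
      ext y
      simp only [Equiv.Perm.subtypePerm_apply, Equiv.Perm.coe_one, id_eq]
      exact not_not.mp y.2
    rw [h1, h2, _root_.permMatrix_one, charpoly_one', Fintype.card_subtype_compl, card_subtype_ne,
      hσ.cycleType]
    simp [mul_comm]
  | induction_disjoint σ τ hd hc ihσ ihτ =>
    have hdis : ∀ x, σ x = x ∨ τ x = x := hd
    have hfixτ : ∀ x, τ x ≠ x → σ (τ x) = τ x := fun x hx =>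
      (hdis (τ x)).resolve_right (fun h => hx (τ.injective h))
    have hfixσ : ∀ x, σ x ≠ x → τ x = x := fun x hx => (hdis x).resolve_left hx
    have hpστ : ∀ x, (σ ((σ * τ) x) ≠ (σ * τ) x) ↔ (σ x ≠ x) := by
      intro x
      by_cases h : τ x = x
      · simp [Equiv.Perm.mul_apply, h]
      · have h1 := hfixτ x h
        have h0 : σ x = x := (hdis x).resolve_right h
        simp [Equiv.Perm.mul_apply, h0, h1]
    have hpτ : ∀ x, (σ (τ x) ≠ τ x) ↔ (σ x ≠ x) := by
      intro x
      by_cases h : τ x = x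
      · simp [h]
      · have h1 := hfixτ x h
        have h0 : σ x = x := (hdis x).resolve_right h
        simp [h0, h1]
    have hpτn : ∀ x, (¬ σ (τ x) ≠ τ x) ↔ (¬ σ x ≠ x) := fun x => not_congr (hpτ x)
    have hpσ : ∀ x, (σ (σ x) ≠ σ x) ↔ (σ x ≠ x) := by intro x; simp
    -- the two restrictions of σ*τ
    have hsub1 : (σ * τ).subtypePerm hpστ = σ.subtypePerm (p := fun x => σ x ≠ x) hpσ := by
      refine Equiv.ext fun y => Subtype.ext ?_
      simp only [Equiv.Perm.subtypePerm_apply, Equiv.Perm.mul_apply]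
      rw [hfixσ y y.2]
    have hsub2 : (σ * τ).subtypePerm (fun x => not_congr (hpστ x)) = τ.subtypePerm (p := fun x => ¬ σ x ≠ x) hpτn := by
      refine Equiv.ext fun y => Subtype.ext ?_
      simp only [Equiv.Perm.subtypePerm_apply, Equiv.Perm.mul_apply]
      by_cases h : τ (y : α) = y
      · rw [h]; exact not_not.mp y.2
      · exact hfixτ y h
    -- cycle part charpoly
    have hnt : Set.Nontrivial {x | σ x ≠ x} := by
      obtain ⟨x, hx, -⟩ := hc
      exact ⟨x, hx, σ x, fun h => hx (σ.injective h), Ne.symm hx⟩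
    have hcyc : (σ.subtypePerm hpσ).IsCycle := hc.isCycleOn.isCycle_subtypePerm hnt
    have hfull : ∀ y : {x // σ x ≠ x}, (σ.subtypePerm hpσ) y ≠ y := by
      intro y h
      exact y.2 (congrArg Subtype.val h)
    have h1 : ((σ.subtypePerm (p := fun x => σ x ≠ x) hpσ).permMatrix ℤ).charpoly = X ^ σ.support.card - 1 := by
      rw [charpoly_isCycle_full _ hcyc hfull]
      congr 2
      exact (Fintype.card_congr (Equiv.refl _)).trans (card_subtype_ne α σ)
    -- split σ*τ
    have hmain : ((σ * τ).permMatrix ℤ).charpoly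
        = (X ^ σ.support.card - 1) * ((τ.subtypePerm (p := fun x => ¬ σ x ≠ x) hpτn).permMatrix ℤ).charpoly := by
      rw [charpoly_permMatrix_split (σ * τ) (fun x => σ x ≠ x) hpστ, hsub1, hsub2, h1]
    -- split τ
    have hτ1 : (τ.subtypePerm (p := fun x => σ x ≠ x) hpτ : Equiv.Perm {x // σ x ≠ x}) = 1 := by
      refine Equiv.ext fun y => Subtype.ext ?_
      simp only [Equiv.Perm.subtypePerm_apply, Equiv.Perm.coe_one, id_eq]
      exact hfixσ y y.2
    have hτsplit : (τ.permMatrix ℤ).charpoly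
        = (X - 1) ^ σ.support.card * ((τ.subtypePerm (p := fun x => ¬ σ x ≠ x) hpτn).permMatrix ℤ).charpoly := by
      rw [charpoly_permMatrix_split τ (fun x => σ x ≠ x) hpτ, hτ1, _root_.permMatrix_one, charpoly_one',
        card_subtype_ne]
    -- cancellation
    have hle : σ.support.card + τ.support.card ≤ Fintype.card α := by
      have h1' := Finset.card_le_univ (σ * τ).support
      rw [hd.card_support_mul] at h1'
      simpa using h1'
    apply mul_left_cancel₀ (pow_ne_zero σ.support.card X_sub_one_ne_zero)
    calc (X - 1) ^ σ.support.card * ((σ * τ).permMatrix ℤ).charpoly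
        = (X ^ σ.support.card - 1) * ((X - 1) ^ σ.support.card *
            ((τ.subtypePerm (p := fun x => ¬ σ x ≠ x) hpτn).permMatrix ℤ).charpoly) := by rw [hmain]; ring
      _ = (X ^ σ.support.card - 1) * (τ.permMatrix ℤ).charpoly := by rw [hτsplit]
      _ = (X ^ σ.support.card - 1) * ((X - 1) ^ (Fintype.card α - τ.support.card) *
            (τ.cycleType.map fun a => (X : ℤ[X]) ^ a - 1).prod) := by rw [ihτ]
      _ = (X - 1) ^ σ.support.card * ((X - 1) ^ (Fintype.card α - (σ * τ).support.card) *
            ((σ * τ).cycleType.map fun a => (X : ℤ[X]) ^ a - 1).prod) := by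
          rw [Equiv.Perm.Disjoint.cycleType_mul hd, hc.cycleType, hd.card_support_mul]
          rw [Multiset.map_add, Multiset.prod_add]
          have hpow : (X - 1 : ℤ[X]) ^ σ.support.card *
              (X - 1) ^ (Fintype.card α - (σ.support.card + τ.support.card))
              = (X - 1) ^ (Fintype.card α - τ.support.card) := by
            rw [← pow_add]
            congr 1
            omega
          rw [← hpow]
          have hsing : (({σ.support.card} : Multiset ℕ).map fun a => (X : ℤ[X]) ^ a - 1).prod
              = X ^ σ.support.card - 1 := by simp
          rw [hsing]
          ring

lemma det_smul_one_add_mul_field {K : Type*} [Field K] {n m : ℕ} (c : K) (hc : c ≠ 0)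
    (A : Matrix (Fin n) (Fin m) K) (B : Matrix (Fin m) (Fin n) K) :
    (c • (1 : Matrix (Fin n) (Fin n) K) + A * B).det * c ^ m
      = c ^ n * (c • (1 : Matrix (Fin m) (Fin m) K) + B * A).det := by
  have h1 : c • (1 : Matrix (Fin n) (Fin n) K) + A * B = c • (1 + (c⁻¹ • A) * B) := by
    rw [smul_add, Matrix.smul_mul, smul_smul, mul_inv_cancel₀ hc, one_smul]
  have h2 : c • (1 : Matrix (Fin m) (Fin m) K) + B * A = c • (1 + B * (c⁻¹ • A)) := by
    rw [smul_add, Matrix.mul_smul, smul_smul, mul_inv_cancel₀ hc, one_smul]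
  rw [h1, h2, Matrix.det_smul, Matrix.det_smul, Matrix.det_one_add_mul_comm]
  simp only [Fintype.card_fin]
  ring

lemma map_smul_one_add_mul {R S : Type*} [CommRing R] [CommRing S] (φ : R →+* S) {n m : ℕ}
    (c : R) (A : Matrix (Fin n) (Fin m) R) (B : Matrix (Fin m) (Fin n) R) :
    (c • (1 : Matrix (Fin n) (Fin n) R) + A * B).map φ
      = φ c • (1 : Matrix (Fin n) (Fin n) S) + A.map φ * B.map φ := by
  ext i j
  simp only [Matrix.map_apply, Matrix.add_apply, Matrix.smul_apply, Matrix.mul_apply,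
    Matrix.one_apply, smul_eq_mul]
  rw [map_add, _root_.map_mul, map_sum]
  congr 1
  · congr 1
    by_cases h : i = j <;> simp [h]
  · exact Finset.sum_congr rfl fun k _ => _root_.map_mul φ _ _

lemma det_smul_one_add_mul {R : Type*} [CommRing R] [IsDomain R] {n m : ℕ} (c : R) (hc : c ≠ 0)
    (A : Matrix (Fin n) (Fin m) R) (B : Matrix (Fin m) (Fin n) R) :
    (c • (1 : Matrix (Fin n) (Fin n) R) + A * B).det * c ^ m
      = c ^ n * (c • (1 : Matrix (Fin m) (Fin m) R) + B * A).det := by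
  let K := FractionRing R
  have hinj : Function.Injective (algebraMap R K) := IsFractionRing.injective R K
  apply hinj
  have hc' : algebraMap R K c ≠ 0 := fun h => hc (hinj (by simpa using h))
  have key := det_smul_one_add_mul_field (algebraMap R K c) hc'
    (A.map (algebraMap R K)) (B.map (algebraMap R K))
  rw [_root_.map_mul, map_pow, _root_.map_mul, map_pow, RingHom.map_det, RingHom.map_det,
    RingHom.mapMatrix_apply, RingHom.mapMatrix_apply,
    map_smul_one_add_mul, map_smul_one_add_mul]
  exact key

lemma charmatrix_one_sub_mul {n m : ℕ} (A : Matrix (Fin n) (Fin m) ℤ)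
    (B : Matrix (Fin m) (Fin n) ℤ) :
    charmatrix (1 - A * B)
      = (X - 1 : ℤ[X]) • (1 : Matrix (Fin n) (Fin n) ℤ[X]) + A.map C * B.map C := by
  ext i j
  by_cases h : i = j
  · subst h
    simp [charmatrix_apply_eq, Matrix.sub_apply, Matrix.one_apply_eq, Matrix.mul_apply,
      Matrix.smul_apply, Matrix.add_apply, map_sum]
    ring
  · simp [charmatrix_apply_ne _ _ _ h, Matrix.sub_apply, Matrix.one_apply_ne h,
      Matrix.mul_apply, Matrix.smul_apply, Matrix.add_apply, map_sum, Matrix.one_apply]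

lemma charpoly_one_sub_mul {n m : ℕ} (A : Matrix (Fin n) (Fin m) ℤ)
    (B : Matrix (Fin m) (Fin n) ℤ) :
    (1 - A * B).charpoly * (X - 1) ^ m = (X - 1) ^ n * (1 - B * A).charpoly := by
  rw [Matrix.charpoly, Matrix.charpoly, charmatrix_one_sub_mul, charmatrix_one_sub_mul]
  exact det_smul_one_add_mul (X - 1) X_sub_one_ne_zero (A.map C) (B.map C)

lemma card_le_of_connected {m n : ℕ} (s t : Fin n → Fin m) (hconn : QuiverConnected s t) :
    m ≤ n + 1 := by
  rcases Nat.eq_zero_or_pos m with rfl | hm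
  · omega
  have v0 : Fin m := ⟨0, hm⟩
  set A : Matrix (Fin n) (Fin m) ℚ := ((incMatrix s t)ᵀ).map (fun z : ℤ => (z : ℚ)) with hA
  set f : (Fin m → ℚ) →ₗ[ℚ] (Fin n → ℚ) := A.mulVecLin with hf
  have hker : ∀ x ∈ LinearMap.ker f, ∀ i : Fin n, x (s i) = x (t i) := by
    intro x hx i
    have h0 : f x i = 0 := by rw [LinearMap.mem_ker.mp hx]; rfl
    rw [hf] at h0
    simp only [Matrix.mulVecLin_apply, Matrix.mulVec, dotProduct, hA, Matrix.map_apply,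
      Matrix.transpose_apply, incMatrix, Matrix.of_apply, Int.cast_sub,
      apply_ite (Int.cast : ℤ → ℚ), Int.cast_one, Int.cast_zero, sub_mul,
      Finset.sum_sub_distrib, ite_mul, one_mul, zero_mul, Finset.sum_ite_eq',
      Finset.mem_univ, if_true] at h0
    linarith
  have hconst : ∀ x ∈ LinearMap.ker f, ∀ w : Fin m, x v0 = x w := by
    intro x hx w
    have hstep : ∀ a b : Fin m,
        (∃ i : Fin n, (s i = a ∧ t i = b) ∨ (s i = b ∧ t i = a)) → x a = x b := by
      rintro a b ⟨i, ⟨h1, h2⟩ | ⟨h1, h2⟩⟩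
      · rw [← h1, ← h2]; exact hker x hx i
      · rw [← h1, ← h2]; exact (hker x hx i).symm
    induction hconn v0 w with
    | refl => rfl
    | tail _ hbc ih => rw [ih]; exact hstep _ _ hbc
  -- ker has dimension at most 1
  have hkerdim : Module.finrank ℚ (LinearMap.ker f) ≤ 1 := by
    let g : LinearMap.ker f →ₗ[ℚ] ℚ := (LinearMap.proj v0).comp (LinearMap.ker f).subtype
    have hginj : Function.Injective g := by
      intro x y hxy
      ext w
      have hx := hconst x.1 x.2 w
      have hy := hconst y.1 y.2 w
      simp only [g, LinearMap.comp_apply, LinearMap.proj_apply, Submodule.subtype_apply] at hxy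
      rw [← hx, ← hy, hxy]
    calc Module.finrank ℚ (LinearMap.ker f) ≤ Module.finrank ℚ ℚ :=
          LinearMap.finrank_le_finrank_of_injective hginj
      _ = 1 := Module.finrank_self ℚ
  have hrange : Module.finrank ℚ (LinearMap.range f) ≤ n := by
    calc Module.finrank ℚ (LinearMap.range f) ≤ Module.finrank ℚ (Fin n → ℚ) :=
          Submodule.finrank_le _
      _ = n := by simp
  have hrn := LinearMap.finrank_range_add_finrank_ker f
  have hdom : Module.finrank ℚ (Fin m → ℚ) = m := by simp
  omega

/-- if the Coxeter-Laplace matrix `Λ_Q = Id - I(Q)·Ǧ_Q⁻¹·I(Q)ᵀ` of a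
connected loop-less quiver is the permutation matrix of a permutation `ξ` of the vertices
with cycle type `π = (π_1,…,π_ℓ)`, then the characteristic polynomial of the Coxeter
matrix `Cox_Q = -Ǧ_Qᵀ·Ǧ_Q⁻¹` equals `(x-1)^{n-m}·∏_a (x^{π_a} - 1)`.
(Stated multiplied through by `(x-1)` so that the exponent `n+1-m ≥ 0` is a natural
number; this is the faithful form covering the tree case `n = m-1` as well.) -/
theorem charpoly_coxeter {m n : ℕ} (s t : Fin n → Fin m)
    (hloop : ∀ i : Fin n, s i ≠ t i) (hconn : QuiverConnected s t)
    (G : Matrix (Fin n) (Fin n) ℤ)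
    (hupper : ∀ i j : Fin n, j < i → G i j = 0)
    (hdiag : ∀ i : Fin n, G i i = 1)
    (hGram : (incMatrix s t)ᵀ * incMatrix s t = G + Gᵀ)
    (ξ : Equiv.Perm (Fin m))
    (hΛ : 1 - incMatrix s t * G⁻¹ * (incMatrix s t)ᵀ
        = Matrix.of fun w v : Fin m => if w = ξ v then (1 : ℤ) else 0) :
    (X - 1) * (-(Gᵀ * G⁻¹)).charpoly
      = (X - 1) ^ (n + 1 - m) * (ξ.partition.parts.map (fun a => (X : Polynomial ℤ) ^ a - 1)).prod := by
  classical
  set I : Matrix (Fin m) (Fin n) ℤ := incMatrix s t with hI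
  have hGtri : G.BlockTriangular id := fun i j h => hupper i j h
  have hGdet : G.det = 1 := by
    rw [Matrix.det_of_upperTriangular hGtri]
    simp [hdiag]
  have hGu : IsUnit G.det := by rw [hGdet]; exact isUnit_one
  have hGinv : G * G⁻¹ = 1 := Matrix.mul_nonsing_inv G hGu
  set A : Matrix (Fin n) (Fin m) ℤ := Iᵀ with hA
  set B : Matrix (Fin m) (Fin n) ℤ := I * G⁻¹ with hB
  have hCox : -(Gᵀ * G⁻¹) = 1 - A * B := by
    have h1 : A * B = (G + Gᵀ) * G⁻¹ := by
      rw [hA, hB, ← Matrix.mul_assoc, hGram]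
    rw [h1, Matrix.add_mul, hGinv]
    abel
  have hBA : 1 - B * A = ξ⁻¹.permMatrix ℤ := by
    rw [hΛ]
    ext w v
    rw [permMatrix_apply, Matrix.of_apply]
    refine if_congr ?_ rfl rfl
    constructor
    · intro h; subst h; simp
    · intro h; subst h; simp
  -- characteristic polynomial of the permutation matrix
  have hχΛ : (1 - B * A).charpoly
      = (X - 1) ^ (m - ξ.support.card) * (ξ.cycleType.map fun a => (X : ℤ[X]) ^ a - 1).prod := by
    rw [hBA, charpoly_permMatrix, Equiv.Perm.support_inv, Equiv.Perm.cycleType_inv,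
      Fintype.card_fin]
  have hparts : (ξ.partition.parts.map fun a => (X : ℤ[X]) ^ a - 1).prod
      = (ξ.cycleType.map fun a => (X : ℤ[X]) ^ a - 1).prod * (X - 1) ^ (m - ξ.support.card) := by
    rw [Equiv.Perm.parts_partition, Multiset.map_add, Multiset.prod_add, Multiset.map_replicate,
      Multiset.prod_replicate, Fintype.card_fin]
    simp
  have hmn : m ≤ n + 1 := card_le_of_connected s t hconn
  have hkey := charpoly_one_sub_mul A B
  apply mul_right_cancel₀ (pow_ne_zero m X_sub_one_ne_zero)
  have hexp : (X - 1 : ℤ[X]) ^ (n + 1 - m) * (X - 1) ^ m = (X - 1) ^ (n + 1) := by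
    rw [← pow_add]
    congr 1
    omega
  calc ((X - 1) * (-(Gᵀ * G⁻¹)).charpoly) * (X - 1) ^ m
      = (X - 1) * ((1 - A * B).charpoly * (X - 1) ^ m) := by rw [hCox]; ring
    _ = (X - 1) * ((X - 1) ^ n * (1 - B * A).charpoly) := by rw [hkey]
    _ = (X - 1) ^ (n + 1) * ((X - 1) ^ (m - ξ.support.card) *
          (ξ.cycleType.map fun a => (X : ℤ[X]) ^ a - 1).prod) := by
        rw [hχΛ, pow_succ]
        ring
    _ = (X - 1) ^ (n + 1 - m) *
          (ξ.partition.parts.map (fun a => (X : Polynomial ℤ) ^ a - 1)).prod * (X - 1) ^ m := by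
        rw [hparts, ← hexp]
        ring

end Aux
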